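/- Let M be a loopless matroid on E. Then the tipless baseless 1-cone Q_1(M) \ (E ∪ {a}) is isomorphic to the Higgs lift L(M) of M, where L(M) is the matroid on E with rank function r_L(X) = min{r(X) + 1, |X|}. -/

import Mathlib

open Set Matroid

namespace ConePaper

variable {α : Type*}

/-- The rank of a set in a matroid: the supremum of sizes of independent subsets. -/
noncomputable def rk (M : Matroid α) (X : Set α) : ℕ :=
  sSup {n : ℕ | ∃ I, M.Indep I ∧ I ⊆ X ∧ I.ncard = n}

/-- A loopless matroid: every singleton of the ground set is independent. -/
def Loopless (M : Matroid α) : Prop := ∀ e ∈ M.E, M.Indep {e}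

/-- A coloop: an element of the ground set lying in every base. -/
def IsColoop (M : Matroid α) (e : α) : Prop := e ∈ M.E ∧ ∀ B, M.IsBase B → e ∈ B

/-- A circuit: a minimal dependent set. -/
def IsCircuit (M : Matroid α) (C : Set α) : Prop :=
  C ⊆ M.E ∧ ¬ M.Indep C ∧ ∀ x ∈ C, M.Indep (C \ {x})

/-- A cyclic flat: a flat whose restriction has no coloops. -/
def CyclicFlat (M : Matroid α) (F : Set α) : Prop :=
  M.IsFlat F ∧ ∀ e ∈ F, ¬ IsColoop (M ↾ F) e

/-- Deletion of a set from a matroid. -/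
def mdel (M : Matroid α) (X : Set α) : Matroid α := M ↾ (M.E \ X)

/-- The cone `q(S) = S ∪ {a} ∪ ⋃_{e ∈ S} T e`. -/
def cone (T : α → Set α) (a : α) (S : Set α) : Set α := S ∪ {a} ∪ ⋃ e ∈ S, T e

/-- The projection `p(S) = (S ∩ E) ∪ {e ∈ E : S ∩ T e ≠ ∅}`. -/
def proj (E : Set α) (T : α → Set α) (S : Set α) : Set α :=
  (S ∩ E) ∪ {e ∈ E | (S ∩ T e).Nonempty}

/-- `FreeCone M Q T a m` says that `Q` is the free `m`-cone of the loopless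
matroid `M`, with extra points `T e` (of size `m`) for `e ∈ M.E` and tip `a`:
its cyclic flats are those of `M` (with the same rank) together with the cones
of nonempty flats of `M` (with rank one greater). -/
structure FreeCone (M Q : Matroid α) (T : α → Set α) (a : α) (m : ℕ) : Prop where
  hm : 1 ≤ m
  hMfin : M.E.Finite
  hloopless : Loopless M
  hTfin : ∀ e ∈ M.E, (T e).Finite
  hTcard : ∀ e ∈ M.E, (T e).ncard = m
  hTdisjE : ∀ e ∈ M.E, Disjoint (T e) M.E
  hTdisj : ∀ e ∈ M.E, ∀ f ∈ M.E, e ≠ f → Disjoint (T e) (T f)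
  ha : a ∉ M.E ∪ ⋃ e ∈ M.E, T e
  hQE : Q.E = M.E ∪ (⋃ e ∈ M.E, T e) ∪ {a}
  hcyclic : ∀ F, CyclicFlat Q F ↔
      (CyclicFlat M F ∨ ∃ F', M.IsFlat F' ∧ F'.Nonempty ∧ F = cone T a F')
  hrank1 : ∀ F, CyclicFlat M F → rk Q F = rk M F
  hrank2 : ∀ F', M.IsFlat F' → F'.Nonempty → rk Q (cone T a F') = rk M F' + 1

/-- A flag of a rank-`k` matroid: a chain of flats, one of each rank `0,…,k`. -/
def IsFlag (N : Matroid α) (k : ℕ) (X : ℕ → Set α) : Prop :=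
  (∀ i ≤ k, N.IsFlat (X i) ∧ rk N (X i) = i) ∧ ∀ i < k, X i ⊂ X (i + 1)

/-! ### Auxiliary lemmas -/

section Aux

variable {M : Matroid α} {X I B C : Set α}

lemma rk_set_nonempty (M : Matroid α) (X : Set α) :
    {n : ℕ | ∃ I, M.Indep I ∧ I ⊆ X ∧ I.ncard = n}.Nonempty :=
  ⟨0, ∅, M.empty_indep, empty_subset X, Set.ncard_empty α⟩

lemma rk_le {k : ℕ} (h : ∀ I, M.Indep I → I ⊆ X → I.ncard ≤ k) : rk M X ≤ k := by
  refine csSup_le (rk_set_nonempty M X) ?_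
  rintro n ⟨I, hI, hIX, rfl⟩
  exact h I hI hIX

lemma ncard_le_rk (hfin : M.E.Finite) (hI : M.Indep I) (hIX : I ⊆ X) :
    I.ncard ≤ rk M X := by
  refine le_csSup ⟨M.E.ncard, ?_⟩ ⟨I, hI, hIX, rfl⟩
  rintro n ⟨J, hJ, _, rfl⟩
  exact Set.ncard_le_ncard hJ.subset_ground hfin

lemma rk_eq_of_basis (hfin : M.E.Finite) (hB : M.IsBasis B X) : rk M X = B.ncard := by
  refine le_antisymm (rk_le fun I hI hIX => ?_) (ncard_le_rk hfin hB.indep hB.subset)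
  obtain ⟨B', hB', hIB'⟩ := hI.subset_isBasis_of_subset hIX hB.subset_ground
  have h1 : B'.encard = B.encard := hB'.encard_eq_encard hB
  have hB'fin : B'.Finite := hfin.subset hB'.indep.subset_ground
  have h2 : B'.ncard = B.ncard := by rw [Set.ncard_def, h1, ← Set.ncard_def]
  have := Set.ncard_le_ncard hIB' hB'fin
  omega

lemma rk_closure_eq (hfin : M.E.Finite) (hX : X ⊆ M.E) :
    rk M (M.closure X) = rk M X := by
  obtain ⟨B, hB⟩ := M.exists_isBasis X hX
  rw [rk_eq_of_basis hfin hB.isBasis_closure_right, rk_eq_of_basis hfin hB]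

lemma closure_flat' (M : Matroid α) (X : Set α) : M.IsFlat (M.closure X) := by
  rw [closure_def, sInter_eq_iInter]
  haveI : Nonempty {F // F ∈ {F | M.IsFlat F ∧ X ∩ M.E ⊆ F}} :=
    ⟨⟨M.E, M.ground_isFlat, inter_subset_right⟩⟩
  exact Matroid.IsFlat.iInter fun F => F.2.1

lemma exists_circuit_subset (M : Matroid α) :
    ∀ (n : ℕ) (X : Set α), X.Finite → X ⊆ M.E → ¬ M.Indep X → X.ncard ≤ n →
      ∃ C, C ⊆ X ∧ IsCircuit M C := by
  intro n
  induction n with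
  | zero =>
      intro X hfin hXE hdep hcard
      have hX : X = ∅ := by
        rw [Nat.le_zero] at hcard
        rwa [Set.ncard_eq_zero hfin] at hcard
      exact absurd (hX ▸ M.empty_indep) hdep
  | succ n ih =>
      intro X hfin hXE hdep hcard
      by_cases h : ∀ x ∈ X, M.Indep (X \ {x})
      · exact ⟨X, Subset.rfl, hXE, hdep, h⟩
      push_neg at h
      obtain ⟨x, hx, hxdep⟩ := h
      obtain ⟨C, hC1, hC2⟩ :=
        ih (X \ {x}) hfin.diff (diff_subset.trans hXE) hxdep (by
          have := Set.ncard_diff_singleton_lt_of_mem hx hfin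
          omega)
      exact ⟨C, hC1.trans diff_subset, hC2⟩

lemma circuit_nonempty (hC : IsCircuit M C) : C.Nonempty :=
  nonempty_iff_ne_empty.2 fun h => hC.2.1 (h ▸ M.empty_indep)

lemma circuit_basis_closure {x : α} (hC : IsCircuit M C) (hx : x ∈ C) :
    M.IsBasis (C \ {x}) (M.closure C) := by
  obtain ⟨hCE, hCdep, hmin⟩ := hC
  have hI : M.Indep (C \ {x}) := hmin x hx
  have hxcl : x ∈ M.closure (C \ {x}) := by
    have hdep : M.Dep (insert x (C \ {x})) := by
      rw [insert_diff_singleton, insert_eq_of_mem hx]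
      exact ⟨hCdep, hCE⟩
    exact ((hI.insert_dep_iff).1 hdep).1
  have hCcl : C ⊆ M.closure (C \ {x}) := by
    intro y hy
    rcases eq_or_ne y x with rfl | hne
    · exact hxcl
    · exact M.subset_closure (C \ {x}) (diff_subset.trans hCE) ⟨hy, hne⟩
  have hb : M.IsBasis (C \ {x}) C :=
    hI.isBasis_of_subset_of_subset_closure diff_subset hCcl
  exact hb.isBasis_closure_right

lemma circuit_closure_cyclicFlat (hC : IsCircuit M C) : CyclicFlat M (M.closure C) := by
  refine ⟨closure_flat' M C, fun e _ hcol => ?_⟩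
  obtain ⟨c, hc⟩ := circuit_nonempty hC
  by_cases heC : e ∈ C
  · have hbase : (M ↾ (M.closure C)).IsBase (C \ {e}) :=
      (isBase_restrict_iff (M.closure_subset_ground C)).2 (circuit_basis_closure hC heC)
    exact (hcol.2 _ hbase).2 rfl
  · have hbase : (M ↾ (M.closure C)).IsBase (C \ {c}) :=
      (isBase_restrict_iff (M.closure_subset_ground C)).2 (circuit_basis_closure hC hc)
    exact heC (hcol.2 _ hbase).1

lemma circuit_ncard (hfin : M.E.Finite) (hC : IsCircuit M C) :
    C.ncard = rk M (M.closure C) + 1 := by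
  obtain ⟨c, hc⟩ := circuit_nonempty hC
  have hb := circuit_basis_closure hC hc
  rw [rk_eq_of_basis hfin hb]
  have hCfin : C.Finite := hfin.subset hC.1
  have := Set.ncard_diff_singleton_add_one hc hCfin
  omega

lemma comapOn_restrict_indep_iff {Q : Matroid α} {R E' : Set α} {t : α → α} {I : Set α}
    (hinj : InjOn t E') (hR : ∀ e ∈ E', t e ∈ R) :
    ((Q ↾ R).comapOn E' t).Indep I ↔ (Q.Indep (t '' I) ∧ I ⊆ E') := by
  rw [comapOn_indep_iff, restrict_indep_iff]
  constructor
  · rintro ⟨⟨h1, _⟩, _, h3⟩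
    exact ⟨h1, h3⟩
  · rintro ⟨hQI, hIE⟩
    exact ⟨⟨hQI, by rintro _ ⟨e, he, rfl⟩; exact hR e (hIE he)⟩, hinj.mono hIE, hIE⟩

end Aux

section Key

variable {M Q : Matroid α} {t : α → α} {a : α}

lemma freeCone_injOn (hFC : FreeCone M Q (fun e => {t e}) a 1) : InjOn t M.E := by
  intro e he f hf hef
  by_contra hne
  have hd := hFC.hTdisj e he f hf hne
  simp only [Set.disjoint_singleton_left, Set.mem_singleton_iff] at hd
  exact hd hef

lemma freeCone_t_not_mem (hFC : FreeCone M Q (fun e => {t e}) a 1) {e : α} (he : e ∈ M.E) :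
    t e ∉ M.E :=
  Set.disjoint_singleton_left.1 (hFC.hTdisjE e he)

lemma freeCone_t_ne_a (hFC : FreeCone M Q (fun e => {t e}) a 1) {e : α} (he : e ∈ M.E) :
    t e ≠ a := by
  intro h
  exact hFC.ha (Set.mem_union_right _ (Set.mem_biUnion he (h ▸ rfl)))

lemma freeCone_t_mem_ground (hFC : FreeCone M Q (fun e => {t e}) a 1) {e : α} (he : e ∈ M.E) :
    t e ∈ Q.E := by
  rw [hFC.hQE]
  exact Or.inl (Or.inr (Set.mem_biUnion he rfl))

lemma freeCone_biUnion_eq (hFC : FreeCone M Q (fun e => {t e}) a 1) :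
    (⋃ e ∈ M.E, ({t e} : Set α)) = t '' M.E := by
  ext x
  simp [eq_comm]

lemma freeCone_ground_fin (hFC : FreeCone M Q (fun e => {t e}) a 1) : Q.E.Finite := by
  rw [hFC.hQE, freeCone_biUnion_eq hFC]
  exact (hFC.hMfin.union (hFC.hMfin.image t)).union (finite_singleton a)

/-- The key independence lemma: the image under `t` of a set which is within one
element of being independent in `M` is independent in `Q`. -/
lemma freeCone_indep_image (hFC : FreeCone M Q (fun e => {t e}) a 1) {B J : Set α}
    (hJE : J ⊆ M.E) (hBJ : B ⊆ J) (hB : M.Indep B) (hcard : J.ncard ≤ B.ncard + 1) :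
    Q.Indep (t '' J) := by
  have hinj := freeCone_injOn hFC
  have hQfin := freeCone_ground_fin hFC
  by_contra hdep
  have hsub : t '' J ⊆ Q.E := by
    rintro _ ⟨e, he, rfl⟩
    exact freeCone_t_mem_ground hFC (hJE he)
  have hJfin : J.Finite := hFC.hMfin.subset hJE
  obtain ⟨C, hCJ, hC⟩ :=
    exists_circuit_subset Q (t '' J).ncard (t '' J) (hJfin.image t) hsub hdep le_rfl
  have hcyc := circuit_closure_cyclicFlat hC
  have hCcl : C ⊆ Q.closure C := Q.subset_closure C hC.1
  rcases (hFC.hcyclic _).1 hcyc with hMcyc | ⟨F', hF', hF'ne, hZ⟩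
  · obtain ⟨c, hc⟩ := circuit_nonempty hC
    obtain ⟨e, heJ, rfl⟩ := hCJ hc
    exact freeCone_t_not_mem hFC (hJE heJ) (hMcyc.1.subset_ground (hCcl hc))
  · have hF'E : F' ⊆ M.E := hF'.subset_ground
    have hrkZ : rk Q (Q.closure C) = rk M F' + 1 := by
      rw [hZ]; exact hFC.hrank2 F' hF' hF'ne
    have hcardC : C.ncard = rk M F' + 2 := by
      have h := circuit_ncard hQfin hC
      omega
    have hCsub : C ⊆ t '' (J ∩ F') := by
      intro c hcC
      obtain ⟨e, heJ, rfl⟩ := hCJ hcC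
      have hcZ : t e ∈ cone (fun e => ({t e} : Set α)) a F' := by
        rw [← hZ]; exact hCcl hcC
      rcases hcZ with (hcF' | hca) | hcT
      · exact absurd hcF' (fun h => freeCone_t_not_mem hFC (hJE heJ) (hF'E h))
      · exact absurd hca (fun h => freeCone_t_ne_a hFC (hJE heJ) h)
      · simp only [Set.mem_iUnion, Set.mem_singleton_iff, exists_prop] at hcT
        obtain ⟨f, hf, hcf⟩ := hcT
        have hef : e = f := hinj (hJE heJ) (hF'E hf) hcf
        exact ⟨e, ⟨heJ, hef ▸ hf⟩, rfl⟩
    have h1 : C.ncard ≤ (J ∩ F').ncard := by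
      have himg : (t '' (J ∩ F')).ncard = (J ∩ F').ncard :=
        Set.ncard_image_of_injOn (hinj.mono (inter_subset_left.trans hJE))
      have := Set.ncard_le_ncard hCsub ((hJfin.inter_of_left _).image t)
      omega
    have h2 : (J ∩ F').ncard ≤ (B ∩ F').ncard + 1 := by
      have hsub2 : J ∩ F' ⊆ (B ∩ F') ∪ (J \ B) := by
        rintro x ⟨hxJ, hxF⟩
        by_cases hxB : x ∈ B
        · exact Or.inl ⟨hxB, hxF⟩
        · exact Or.inr ⟨hxJ, hxB⟩
      have hd : (J \ B).ncard ≤ 1 := by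
        have h' := Set.ncard_diff hBJ (hJfin.subset hBJ)
        have hb := Set.ncard_le_ncard hBJ hJfin
        omega
      have hfin1 : ((B ∩ F') ∪ (J \ B)).Finite :=
        ((hJfin.subset hBJ).inter_of_left _).union hJfin.diff
      have := Set.ncard_le_ncard hsub2 hfin1
      have := Set.ncard_union_le (B ∩ F') (J \ B)
      omega
    have h3 : (B ∩ F').ncard ≤ rk M F' :=
      ncard_le_rk hFC.hMfin (hB.subset inter_subset_left) inter_subset_right
    omega

end Key

/-- The tipless baseless 1-cone is isomorphic to the Higgs lift of `M`, via the
bijection sending `t e` to `e`. -/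
theorem tipless_baseless_one_cone_eq_higgs_lift {M Q : Matroid α} {t : α → α} {a : α}
    (hFC : FreeCone M Q (fun e => {t e}) a 1) :
    ∃ L : Matroid α, L.E = M.E ∧
      (∀ X ⊆ M.E, rk L X = min (rk M X + 1) X.ncard) ∧
      ∃ hinj : Set.InjOn t L.E, mdel Q (M.E ∪ {a}) = L.map t hinj := by
  have hinj := freeCone_injOn hFC
  have hQfin := freeCone_ground_fin hFC
  set R : Set α := Q.E \ (M.E ∪ {a}) with hRdef
  have hR : R = t '' M.E := by
    rw [hRdef, hFC.hQE, freeCone_biUnion_eq hFC]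
    ext x
    constructor
    · rintro ⟨hx1, hx2⟩
      rcases hx1 with (hxM | hxT) | hxa
      · exact absurd (Or.inl hxM) hx2
      · exact hxT
      · exact absurd (Or.inr hxa) hx2
    · rintro ⟨e, he, rfl⟩
      refine ⟨Or.inl (Or.inr ⟨e, he, rfl⟩), ?_⟩
      rintro (h | h)
      · exact freeCone_t_not_mem hFC he h
      · exact freeCone_t_ne_a hFC he h
  have htR : ∀ e ∈ M.E, t e ∈ R := by
    intro e he
    rw [hR]
    exact ⟨e, he, rfl⟩
  set L : Matroid α := (Q ↾ R).comapOn M.E t with hLdef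
  have hLind : ∀ I : Set α, L.Indep I ↔ (Q.Indep (t '' I) ∧ I ⊆ M.E) := by
    intro I
    rw [hLdef]
    exact comapOn_restrict_indep_iff hinj htR
  have hLE : L.E = M.E := rfl
  have hLfin : L.E.Finite := by rw [hLE]; exact hFC.hMfin
  refine ⟨L, rfl, ?_, hinj, ?_⟩
  · -- the rank formula
    intro X hXE
    have hXfin : X.Finite := hFC.hMfin.subset hXE
    refine le_antisymm (le_min (rk_le ?_) (rk_le ?_)) ?_
    · -- ncard I ≤ rk M X + 1 for L-independent I ⊆ X
      intro I hI hIX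
      rcases X.eq_empty_or_nonempty with rfl | hXne
      · rw [subset_empty_iff.1 hIX]
        simp
      have hIE : I ⊆ M.E := hIX.trans hXE
      obtain ⟨hQI, -⟩ := (hLind I).1 hI
      have hF' : M.IsFlat (M.closure X) := closure_flat' M X
      have hF'ne : (M.closure X).Nonempty := hXne.mono (M.subset_closure X hXE)
      have hsub : t '' I ⊆ cone (fun e => ({t e} : Set α)) a (M.closure X) := by
        rintro _ ⟨e, he, rfl⟩
        exact Or.inr (Set.mem_biUnion (M.subset_closure X hXE (hIX he)) rfl)
      have hle := ncard_le_rk hQfin hQI hsub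
      rw [hFC.hrank2 _ hF' hF'ne, rk_closure_eq hFC.hMfin hXE] at hle
      rwa [Set.ncard_image_of_injOn (hinj.mono hIE)] at hle
    · intro I _ hIX
      exact Set.ncard_le_ncard hIX hXfin
    · -- lower bound
      obtain ⟨B, hB⟩ := M.exists_isBasis X hXE
      have hrkX : rk M X = B.ncard := rk_eq_of_basis hFC.hMfin hB
      by_cases hBX : X ⊆ B
      · have hXB : X = B := subset_antisymm hBX hB.subset
        have hXind : M.Indep X := hXB ▸ hB.indep
        have hLX : L.Indep X :=
          (hLind X).2 ⟨freeCone_indep_image hFC hXE Subset.rfl hXind (Nat.le_succ _), hXE⟩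
        have hge := ncard_le_rk hLfin hLX Subset.rfl
        exact le_trans (min_le_right _ _) hge
      · obtain ⟨e, heX, heB⟩ := not_subset.1 hBX
        have hJX : insert e B ⊆ X := insert_subset heX hB.subset
        have hBfin : B.Finite := hXfin.subset hB.subset
        have hJcard : (insert e B).ncard = B.ncard + 1 :=
          Set.ncard_insert_of_notMem heB hBfin
        have hLJ : L.Indep (insert e B) := by
          refine (hLind _).2 ⟨?_, hJX.trans hXE⟩
          exact freeCone_indep_image hFC (hJX.trans hXE) (subset_insert e B) hB.indep
            (by omega)
        have hge := ncard_le_rk hLfin hLJ hJX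
        refine le_trans (min_le_left _ _) ?_
        omega
  · -- the matroid equality
    show Q ↾ R = L.map t hinj
    refine ext_indep ?_ ?_
    · exact hR
    · intro I hIground
      rw [restrict_ground_eq] at hIground
      rw [restrict_indep_iff, show (L.map t hinj).Indep I ↔ ∃ I₀, L.Indep I₀ ∧ I = t '' I₀ from map_indep_iff]
      constructor
      · rintro ⟨hQI, hIR⟩
        have hIR' : I ⊆ t '' M.E := hR ▸ hIR
        have himg : t '' (M.E ∩ t ⁻¹' I) = I := by
          ext x
          constructor
          · rintro ⟨e, ⟨_, heI⟩, rfl⟩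
            exact heI
          · intro hx
            obtain ⟨e, he, rfl⟩ := hIR' hx
            exact ⟨e, ⟨he, hx⟩, rfl⟩
        refine ⟨M.E ∩ t ⁻¹' I, (hLind _).2 ⟨?_, inter_subset_left⟩, himg.symm⟩
        rw [himg]
        exact hQI
      · rintro ⟨I₀, hI₀, rfl⟩
        obtain ⟨hQ, hI₀E⟩ := (hLind I₀).1 hI₀
        refine ⟨hQ, ?_⟩
        intro x hx
        obtain ⟨e, he, rfl⟩ := hx
        exact htR e (hI₀E he)
end ConePaper
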